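/- Every tensor A ∈ ℝ^(n^m) with n ≥ 1 and m ≥ 2 admits a tropical H-eigenpair: there exist x ∈ ℝ^n and λ ∈ ℝ such that for every i ∈ [n], min over (i2,...,im) ∈ [n]^{m-1} of (a_{i i2...im} + x_{i2} + ... + x_{im}) = λ + (m-1)·x_i. -/

import Mathlib

open Finset Filter Topology

namespace TropAux

variable {n k : ℕ}

/-- The tropical (min-plus) map associated to the tensor `A`. -/
noncomputable def Fmap (hn : 0 < n) (A : Fin n → (Fin k → Fin n) → ℝ)
    (x : Fin n → ℝ) (i : Fin n) : ℝ :=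
  Finset.univ.inf' ⟨fun _ => ⟨0, hn⟩, Finset.mem_univ _⟩
    (fun t : Fin k → Fin n => A i t + ∑ j, x (t j))

lemma inf'_add_const {ι : Type*} (s : Finset ι) (h : s.Nonempty) (f : ι → ℝ) (c : ℝ) :
    s.inf' h (fun i => f i + c) = s.inf' h f + c := by
  apply le_antisymm
  · obtain ⟨i0, hi0, heq⟩ := s.exists_mem_eq_inf' (H := h) f
    calc s.inf' h (fun i => f i + c) ≤ f i0 + c := Finset.inf'_le _ hi0
    _ = s.inf' h f + c := by rw [heq]
  · obtain ⟨i0, hi0, heq⟩ := s.exists_mem_eq_inf' (H := h) (fun i => f i + c)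
    rw [heq]
    exact (by have := Finset.inf'_le f hi0; linarith)

lemma sum_const_fin (k : ℕ) (r : ℝ) : (∑ _j : Fin k, r) = (k : ℝ) * r := by
  simp [Finset.sum_const, mul_comm]

lemma Fmap_le (hn : 0 < n) (A : Fin n → (Fin k → Fin n) → ℝ)
    (x y : Fin n → ℝ) (i : Fin n) :
    Fmap hn A x i ≤ Fmap hn A y i + (k : ℝ) * dist x y := by
  have hne : (Finset.univ : Finset (Fin k → Fin n)).Nonempty :=
    ⟨fun _ => ⟨0, hn⟩, Finset.mem_univ _⟩
  obtain ⟨t0, _, ht0⟩ := Finset.univ.exists_mem_eq_inf' (H := hne)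
    (fun t : Fin k → Fin n => A i t + ∑ j, y (t j))
  have h1 : Fmap hn A x i ≤ A i t0 + ∑ j, x (t0 j) :=
    Finset.inf'_le _ (Finset.mem_univ _)
  have h2 : ∑ j, x (t0 j) ≤ ∑ j, y (t0 j) + (k : ℝ) * dist x y := by
    calc ∑ j, x (t0 j) ≤ ∑ j : Fin k, (y (t0 j) + dist x y) := by
          apply Finset.sum_le_sum
          intro j _
          have h := dist_le_pi_dist x y (t0 j)
          rw [Real.dist_eq] at h
          have := le_abs_self (x (t0 j) - y (t0 j))
          linarith
    _ = ∑ j, y (t0 j) + (k : ℝ) * dist x y := by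
          rw [Finset.sum_add_distrib, sum_const_fin]
  have h3 : Fmap hn A y i = A i t0 + ∑ j, y (t0 j) := ht0
  linarith

/-- Oscillation bound: components of `Fmap` differ by at most `Dhi - Dlo`. -/
lemma Fmap_osc (hn : 0 < n) (A : Fin n → (Fin k → Fin n) → ℝ)
    (Dlo Dhi : ℝ) (hlo : ∀ i t, Dlo ≤ A i t) (hhi : ∀ i t, A i t ≤ Dhi)
    (y : Fin n → ℝ) (i i' : Fin n) :
    Fmap hn A y i ≤ Fmap hn A y i' + (Dhi - Dlo) := by
  have hneN : (Finset.univ : Finset (Fin n)).Nonempty := ⟨⟨0, hn⟩, Finset.mem_univ _⟩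
  have hne : (Finset.univ : Finset (Fin k → Fin n)).Nonempty :=
    ⟨fun _ => ⟨0, hn⟩, Finset.mem_univ _⟩
  obtain ⟨j0, _, hj0⟩ := Finset.univ.exists_mem_eq_inf' (H := hneN) y
  have hj0le : ∀ a : Fin n, y j0 ≤ y a := by
    intro a
    rw [← hj0]
    exact Finset.inf'_le _ (Finset.mem_univ a)
  obtain ⟨t', _, ht'⟩ := Finset.univ.exists_mem_eq_inf' (H := hne)
    (fun t : Fin k → Fin n => A i' t + ∑ j, y (t j))
  have h1 : Fmap hn A y i ≤ A i (fun _ => j0) + ∑ _j : Fin k, y j0 :=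
    Finset.inf'_le _ (Finset.mem_univ _)
  have h2 : ∑ _j : Fin k, y j0 ≤ ∑ j, y (t' j) :=
    Finset.sum_le_sum fun j _ => hj0le (t' j)
  have h3 : Fmap hn A y i' = A i' t' + ∑ j, y (t' j) := ht'
  have h4 : A i (fun _ => j0) ≤ Dhi := hhi _ _
  have h5 : Dlo ≤ A i' t' := hlo _ _
  linarith

/-- Bounds on `Fmap y` when `y` is bounded. -/
lemma Fmap_bounds (hn : 0 < n) (A : Fin n → (Fin k → Fin n) → ℝ)
    (Dlo Dhi : ℝ) (hlo : ∀ i t, Dlo ≤ A i t) (hhi : ∀ i t, A i t ≤ Dhi)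
    (y : Fin n → ℝ) (R : ℝ) (hR : ∀ j, |y j| ≤ R) (i : Fin n) :
    Dlo - (k : ℝ) * R ≤ Fmap hn A y i ∧ Fmap hn A y i ≤ Dhi + (k : ℝ) * R := by
  have hne : (Finset.univ : Finset (Fin k → Fin n)).Nonempty :=
    ⟨fun _ => ⟨0, hn⟩, Finset.mem_univ _⟩
  constructor
  · apply Finset.le_inf'
    intro t _
    have h1 : Dlo ≤ A i t := hlo _ _
    have h2 : -((k : ℝ) * R) ≤ ∑ j, y (t j) := by
      have : ∑ _j : Fin k, (-R) ≤ ∑ j, y (t j) := by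
        apply Finset.sum_le_sum
        intro j _
        have := abs_le.mp (hR (t j))
        linarith [this.1]
      rw [sum_const_fin] at this
      linarith
    linarith
  · have h1 : Fmap hn A y i ≤ A i (fun _ => ⟨0, hn⟩) + ∑ _j : Fin k, y ⟨0, hn⟩ :=
      Finset.inf'_le _ (Finset.mem_univ _)
    have h2 : ∑ _j : Fin k, y (⟨0, hn⟩ : Fin n) ≤ (k : ℝ) * R := by
      rw [sum_const_fin]
      have := abs_le.mp (hR ⟨0, hn⟩)
      have hk : (0 : ℝ) ≤ (k : ℝ) := Nat.cast_nonneg k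
      nlinarith [this.2]
    have h3 : A i (fun _ => ⟨0, hn⟩) ≤ Dhi := hhi _ _
    linarith

/-- Shift property: adding a constant shifts `Fmap` by `k` times the constant. -/
lemma Fmap_shift (hn : 0 < n) (A : Fin n → (Fin k → Fin n) → ℝ)
    (y : Fin n → ℝ) (c : ℝ) (i : Fin n) :
    Fmap hn A (fun j => y j + c) i = Fmap hn A y i + (k : ℝ) * c := by
  have key : ∀ t : Fin k → Fin n,
      A i t + ∑ j, (y (t j) + c) = (A i t + ∑ j, y (t j)) + (k : ℝ) * c := by
    intro t
    rw [Finset.sum_add_distrib, sum_const_fin]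
    ring
  unfold Fmap
  simp only [key]
  exact inf'_add_const _ _ _ _

/-- For every contraction factor `0 ≤ α < 1` there is a fixed point of the
rescaled tropical map. -/
lemma exists_fixed (hn : 0 < n) (hk : 1 ≤ k) (A : Fin n → (Fin k → Fin n) → ℝ)
    (α : ℝ) (h0 : 0 ≤ α) (h1 : α < 1) :
    ∃ x : Fin n → ℝ, ∀ i, Fmap hn A (α • x) i = (k : ℝ) * x i := by
  have hkpos : (0 : ℝ) < (k : ℝ) := by exact_mod_cast Nat.lt_of_lt_of_le Nat.zero_lt_one hk
  set Φ : (Fin n → ℝ) → (Fin n → ℝ) := fun x i => Fmap hn A (α • x) i / k with hΦ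
  have hlip : ∀ x y, dist (Φ x) (Φ y) ≤ α * dist x y := by
    intro x y
    rw [dist_pi_le_iff (by positivity)]
    intro i
    have hd : dist (α • x) (α • y) = α * dist x y := by
      rw [dist_smul₀, Real.norm_eq_abs, abs_of_nonneg h0]
    have h1' := Fmap_le hn A (α • x) (α • y) i
    have h2' := Fmap_le hn A (α • y) (α • x) i
    rw [dist_comm (α • y) (α • x), hd] at h2'
    rw [hd] at h1'
    have hkd : (0 : ℝ) ≤ dist x y := dist_nonneg
    rw [Real.dist_eq, hΦ]
    simp only
    rw [div_sub_div_same, abs_div, abs_of_pos hkpos, div_le_iff₀ hkpos]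
    rw [abs_sub_le_iff]
    constructor <;> nlinarith
  haveI : Nonempty (Fin n) := ⟨⟨0, hn⟩⟩
  set K : NNReal := ⟨α, h0⟩ with hK
  have hc : ContractingWith K Φ := by
    constructor
    · rw [← NNReal.coe_lt_one]
      exact h1
    · exact LipschitzWith.of_dist_le_mul hlip
  obtain ⟨x, hx, -⟩ := hc.exists_fixedPoint 0 (edist_ne_top _ _)
  refine ⟨x, fun i => ?_⟩
  have : Φ x i = x i := by rw [hx]
  rw [hΦ] at this
  simp only at this
  field_simp at this
  linarith [this]

end TropAux

/-- Existence of a tropical H-eigenpair for every real tensor.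
A tensor of order `k+1 ≥ 2` and rank `n ≥ 1` is `A : Fin n → (Fin k → Fin n) → ℝ`. -/
theorem stmt_5 (n k : ℕ) (hn : 0 < n) (hk : 1 ≤ k)
    (A : Fin n → (Fin k → Fin n) → ℝ) :
    ∃ (x : Fin n → ℝ) (lam : ℝ), ∀ i : Fin n,
      Finset.univ.inf' ⟨fun _ => ⟨0, hn⟩, Finset.mem_univ _⟩
        (fun t : Fin k → Fin n => A i t + ∑ j, x (t j)) = lam + (k : ℝ) * x i := by
  classical
  open TropAux Filter Topology in
  haveI : Nonempty (Fin n) := ⟨⟨0, hn⟩⟩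
  set i0 : Fin n := ⟨0, hn⟩ with hi0
  have hkpos : (0 : ℝ) < (k : ℝ) := by exact_mod_cast Nat.lt_of_lt_of_le Nat.zero_lt_one hk
  have hk1 : (1 : ℝ) ≤ (k : ℝ) := by exact_mod_cast hk
  -- bounds on the tensor entries
  have hneP : (Finset.univ : Finset (Fin n × (Fin k → Fin n))).Nonempty :=
    ⟨(i0, fun _ => i0), Finset.mem_univ _⟩
  set Dhi : ℝ := Finset.univ.sup' hneP (fun p : Fin n × (Fin k → Fin n) => A p.1 p.2) with hDhi
  set Dlo : ℝ := Finset.univ.inf' hneP (fun p : Fin n × (Fin k → Fin n) => A p.1 p.2) with hDlo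
  have hhi : ∀ i t, A i t ≤ Dhi := fun i t => Finset.le_sup' (fun p : Fin n × (Fin k → Fin n) => A p.1 p.2) (Finset.mem_univ (i, t))
  have hlo : ∀ i t, Dlo ≤ A i t := fun i t => Finset.inf'_le (fun p : Fin n × (Fin k → Fin n) => A p.1 p.2) (Finset.mem_univ (i, t))
  have hDle : Dlo ≤ Dhi := le_trans (hlo i0 fun _ => i0) (hhi i0 fun _ => i0)
  set D : ℝ := Dhi - Dlo with hD
  have hD0 : 0 ≤ D := by simp [hD]; linarith
  -- the sequence of contraction factors
  set a : ℕ → ℝ := fun m => 1 - 1 / (m + 1) with ha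
  have ha0 : ∀ m, 0 ≤ a m := by
    intro m
    show 0 ≤ 1 - 1 / ((m : ℝ) + 1)
    have h1 : (1 : ℝ) ≤ (m : ℝ) + 1 := by
      have := Nat.cast_nonneg (α := ℝ) m
      linarith
    have : 1 / ((m : ℝ) + 1) ≤ 1 := by
      rw [div_le_one (by positivity)]
      exact h1
    linarith
  have ha1 : ∀ m, a m < 1 := by
    intro m
    show 1 - 1 / ((m : ℝ) + 1) < 1
    have : 0 < 1 / ((m : ℝ) + 1) := by positivity
    linarith
  have haT : Tendsto a atTop (𝓝 1) := by
    have h : Tendsto (fun n : ℕ => 1 / ((n : ℝ) + 1)) atTop (𝓝 0) :=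
      tendsto_one_div_add_atTop_nhds_zero_nat
    have := h.const_sub (1 : ℝ)
    simpa [ha] using this
  -- fixed points
  have hfix := fun m => exists_fixed hn hk A (a m) (ha0 m) (ha1 m)
  choose x hx using hfix
  set z : ℕ → Fin n → ℝ := fun m i => x m i - x m i0 with hz
  set μ : ℕ → ℝ := fun m => (1 - a m) * x m i0 with hμ
  -- the key identity
  have keyEq : ∀ m i, Fmap hn A (a m • z m) i = (k : ℝ) * z m i + (k : ℝ) * μ m := by
    intro m i
    have hsplit : (a m • x m) = fun j => (a m • z m) j + a m * x m i0 := by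
      funext j
      simp [hz, Pi.smul_apply, smul_eq_mul]
      ring
    have h1 : Fmap hn A (a m • x m) i = Fmap hn A (a m • z m) i + (k : ℝ) * (a m * x m i0) := by
      rw [hsplit]
      exact Fmap_shift hn A _ _ i
    have h2 := hx m i
    have h3 : x m i = z m i + x m i0 := by simp [hz]
    rw [h2, h3] at h1
    rw [hμ]
    simp only
    linarith [h1]
  -- bound on z
  have hzbound : ∀ m i, |z m i| ≤ D := by
    intro m i
    have h1 := Fmap_osc hn A Dlo Dhi hlo hhi (a m • x m) i i0
    have h2 := Fmap_osc hn A Dlo Dhi hlo hhi (a m • x m) i0 i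
    rw [hx m i, hx m i0] at h1 h2
    have h3 : |(k : ℝ) * z m i| ≤ D := by
      rw [abs_le]
      constructor
      · have : (k : ℝ) * z m i = (k : ℝ) * x m i - (k : ℝ) * x m i0 := by
          simp [hz]; ring
        rw [this, hD]; linarith
      · have : (k : ℝ) * z m i = (k : ℝ) * x m i - (k : ℝ) * x m i0 := by
          simp [hz]; ring
        rw [this, hD]; linarith
    rw [abs_mul, abs_of_pos hkpos] at h3
    nlinarith [abs_nonneg (z m i)]
  -- bound on μ
  set B : ℝ := |Dlo| + |Dhi| + (k : ℝ) * D with hB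
  have hμbound : ∀ m, |μ m| ≤ B := by
    intro m
    have hmid : (k : ℝ) * μ m = Fmap hn A (a m • z m) i0 := by
      have := keyEq m i0
      have hzz : z m i0 = 0 := by simp [hz]
      rw [hzz] at this
      linarith [this]
    have hbd : ∀ j, |(a m • z m) j| ≤ D := by
      intro j
      have : |(a m • z m) j| = |a m| * |z m j| := by
        simp [Pi.smul_apply, smul_eq_mul, abs_mul]
      rw [this, abs_of_nonneg (ha0 m)]
      calc a m * |z m j| ≤ 1 * |z m j| := by
            apply mul_le_mul_of_nonneg_right (le_of_lt (ha1 m)) (abs_nonneg _)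
      _ = |z m j| := one_mul _
      _ ≤ D := hzbound m j
    obtain ⟨hlo', hhi'⟩ := Fmap_bounds hn A Dlo Dhi hlo hhi (a m • z m) D hbd i0
    rw [← hmid] at hlo' hhi'
    have h1 : |(k : ℝ) * μ m| ≤ B := by
      rw [abs_le]
      constructor
      · have := neg_abs_le Dlo
        have h2 : (0:ℝ) ≤ |Dhi| := abs_nonneg _
        rw [hB]; linarith
      · have := le_abs_self Dhi
        have h2 : (0:ℝ) ≤ |Dlo| := abs_nonneg _
        rw [hB]; linarith
    rw [abs_mul, abs_of_pos hkpos] at h1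
    nlinarith [abs_nonneg (μ m)]
  have hB0 : 0 ≤ B := le_trans (abs_nonneg _) (hμbound 0)
  -- compactness: extract a convergent subsequence of (z m, μ m)
  set u : ℕ → (Fin n → ℝ) × ℝ := fun m => (z m, μ m) with hu
  have hmem : ∀ m, u m ∈ Metric.closedBall (0 : (Fin n → ℝ) × ℝ) (D + B) := by
    intro m
    rw [Metric.mem_closedBall, Prod.dist_eq]
    apply max_le
    · rw [show (0 : (Fin n → ℝ) × ℝ).1 = (0 : Fin n → ℝ) from rfl]
      rw [dist_pi_le_iff (by linarith)]
      intro i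
      rw [Real.dist_eq]
      simpa using le_trans (by simpa using hzbound m i) (by linarith : D ≤ D + B)
    · rw [show (0 : (Fin n → ℝ) × ℝ).2 = (0 : ℝ) from rfl, Real.dist_eq]
      simpa using le_trans (by simpa using hμbound m) (by linarith : B ≤ D + B)
  obtain ⟨⟨zl, μl⟩, -, φ, hφ, hlim⟩ :=
    (isCompact_closedBall (0 : (Fin n → ℝ) × ℝ) (D + B)).tendsto_subseq hmem
  have hzlim : Tendsto (fun m => z (φ m)) atTop (𝓝 zl) := by
    have := (continuous_fst.tendsto ((zl, μl) : (Fin n → ℝ) × ℝ)).comp hlim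
    exact this
  have hμlim : Tendsto (fun m => μ (φ m)) atTop (𝓝 μl) := by
    have := (continuous_snd.tendsto ((zl, μl) : (Fin n → ℝ) × ℝ)).comp hlim
    exact this
  have halim : Tendsto (fun m => a (φ m)) atTop (𝓝 1) := haT.comp hφ.tendsto_atTop
  have hsmul : Tendsto (fun m => a (φ m) • z (φ m)) atTop (𝓝 zl) := by
    have := halim.smul hzlim
    simpa using this
  -- continuity of Fmap in its argument
  have hcont : ∀ i, Continuous (fun y => Fmap hn A y i) := by
    intro i
    apply LipschitzWith.continuous (K := (k : NNReal))
    apply LipschitzWith.of_dist_le_mul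
    intro p q
    rw [Real.dist_eq, abs_sub_le_iff]
    have h1 := Fmap_le hn A p q i
    have h2 := Fmap_le hn A q p i
    rw [dist_comm q p] at h2
    constructor <;> · push_cast; linarith
  -- pass to the limit in the key identity
  have heq : ∀ i, Fmap hn A zl i = (k : ℝ) * zl i + (k : ℝ) * μl := by
    intro i
    have hL : Tendsto (fun m => Fmap hn A (a (φ m) • z (φ m)) i) atTop (𝓝 (Fmap hn A zl i)) :=
      ((hcont i).tendsto zl).comp hsmul
    have hzi : Tendsto (fun m => z (φ m) i) atTop (𝓝 (zl i)) :=
      ((continuous_apply i).tendsto zl).comp hzlim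
    have hR : Tendsto (fun m => (k : ℝ) * z (φ m) i + (k : ℝ) * μ (φ m)) atTop
        (𝓝 ((k : ℝ) * zl i + (k : ℝ) * μl)) :=
      (hzi.const_mul (k : ℝ)).add (hμlim.const_mul (k : ℝ))
    have hsame : (fun m => Fmap hn A (a (φ m) • z (φ m)) i)
        = fun m => (k : ℝ) * z (φ m) i + (k : ℝ) * μ (φ m) := by
      funext m
      exact keyEq (φ m) i
    rw [hsame] at hL
    exact tendsto_nhds_unique hL hR
  refine ⟨zl, (k : ℝ) * μl, fun i => ?_⟩
  have := heq i
  unfold Fmap at this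
  rw [this]
  ring
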